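/- Let K be a field and C a small K-linear category. If C admits a separability family, then C is locally finite dimensional: for all objects x, y of C, the K-vector space Hom_C(x,y) is finite dimensional. -/

import Mathlib

open CategoryTheory TensorProduct

/-- Composition as a `K`-linear map out of the tensor product of Hom spaces:
`h ⊗ k ↦ h ∘ k = k ≫ h`. -/
noncomputable def compMap (K : Type*) [Field K] {C : Type*} [Category C] [Preadditive C]
    [Linear K C] (X Y Z : C) : ((Z ⟶ X) ⊗[K] (Y ⟶ Z)) →ₗ[K] (Y ⟶ X) :=
  TensorProduct.lift (LinearMap.mk₂ K (fun (h : Z ⟶ X) (k : Y ⟶ Z) => k ≫ h)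
    (fun h h' k => by simp) (fun r h k => by simp)
    (fun h k k' => by simp) (fun r h k => by simp))

/-- A separability family for a `K`-linear category `C`. -/
structure SeparabilityFamily (K : Type*) [Field K] (C : Type*) [Category C] [Preadditive C]
    [Linear K C] where
  a : ∀ x y : C, (y ⟶ x) ⊗[K] (x ⟶ y)
  finite_support : ∀ x : C, {y : C | a x y ≠ 0}.Finite
  sum_comp : ∀ x : C, (∑ᶠ y : C, compMap K x x y (a x y)) = 𝟙 x
  compat : ∀ {x z : C} (f : x ⟶ z) (y : C),
    LinearMap.rTensor (x ⟶ y) (Linear.rightComp K y f) (a x y)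
      = LinearMap.lTensor (y ⟶ z) (Linear.leftComp K y f) (a z y)

section Aux

variable {K : Type*} [Field K]

/-- Contraction of the right tensor factor against a linear functional. -/
noncomputable def contrAux {M N : Type*} [AddCommGroup M] [Module K M] [AddCommGroup N]
    [Module K N] (ψ : N →ₗ[K] K) : M ⊗[K] N →ₗ[K] M :=
  (TensorProduct.rid K M).toLinearMap ∘ₗ ψ.lTensor M

@[simp] lemma contrAux_tmul {M N : Type*} [AddCommGroup M] [Module K M] [AddCommGroup N]
    [Module K N] (ψ : N →ₗ[K] K) (m : M) (n : N) :
    contrAux ψ (m ⊗ₜ[K] n) = ψ n • m := by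
  simp [contrAux]

lemma contrAux_rTensor {M M' N : Type*} [AddCommGroup M] [Module K M] [AddCommGroup M']
    [Module K M'] [AddCommGroup N] [Module K N] (ψ : N →ₗ[K] K) (g : M →ₗ[K] M')
    (t : M ⊗[K] N) : contrAux ψ (g.rTensor N t) = g (contrAux ψ t) := by
  induction t with
  | zero => simp
  | tmul m n => simp
  | add t₁ t₂ h₁ h₂ => simp [h₁, h₂]

lemma contrAux_lTensor {M N N' : Type*} [AddCommGroup M] [Module K M] [AddCommGroup N]
    [Module K N] [AddCommGroup N'] [Module K N'] (ψ : N →ₗ[K] K) (g : N' →ₗ[K] N)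
    (t : M ⊗[K] N') : contrAux ψ (g.lTensor M t) = contrAux (ψ ∘ₗ g) t := by
  induction t with
  | zero => simp
  | tmul m n => simp
  | add t₁ t₂ h₁ h₂ => simp [h₁, h₂]

/-- Every tensor can be written with basis vectors in the right factor. -/
lemma exists_rep_basis {M N ι : Type*} [AddCommGroup M] [Module K M] [AddCommGroup N]
    [Module K N] (b : Module.Basis ι K N) (t : M ⊗[K] N) :
    ∃ d : ι →₀ M, t = d.sum fun i m => m ⊗ₜ[K] b i := by
  induction t with
  | zero => exact ⟨0, by simp⟩
  | tmul m n =>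
    refine ⟨(b.repr n).mapRange (· • m) (zero_smul K m), ?_⟩
    rw [Finsupp.sum_mapRange_index (by simp)]
    conv_lhs => rw [← b.linearCombination_repr n, Finsupp.linearCombination_apply,
      Finsupp.sum, tmul_sum]
    rw [Finsupp.sum]
    exact Finset.sum_congr rfl fun i _ => by rw [tmul_smul, smul_tmul']
  | add t₁ t₂ h₁ h₂ =>
    obtain ⟨d₁, hd₁⟩ := h₁
    obtain ⟨d₂, hd₂⟩ := h₂
    refine ⟨d₁ + d₂, ?_⟩
    rw [hd₁, hd₂, Finsupp.sum_add_index' (fun i => zero_tmul M (b i))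
      (fun i m m' => add_tmul m m' (b i))]

lemma contrAux_coord {M N ι : Type*} [AddCommGroup M] [Module K M] [AddCommGroup N]
    [Module K N] (b : Module.Basis ι K N) (d : ι →₀ M) (i : ι) :
    contrAux (b.coord i) (d.sum fun j m => m ⊗ₜ[K] b j) = d i := by
  classical
  rw [map_finsuppSum]
  have h1 : ∀ j ∈ d.support, contrAux (b.coord i) (d j ⊗ₜ[K] b j)
      = if j = i then d j else 0 := by
    intro j _
    rw [contrAux_tmul, Module.Basis.coord_apply, Module.Basis.repr_self, Finsupp.single_apply,
      ite_smul, one_smul, zero_smul]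
  exact (Finsupp.sum_congr (g2 := fun j m => if j = i then m else 0) h1).trans
    (Finsupp.sum_ite_self_eq' d i)

lemma contrAux_mem_span {M N : Type*} [AddCommGroup M] [Module K M] [AddCommGroup N]
    [Module K N] [DecidableEq M] (ψ : N →ₗ[K] K) (S : Finset (M × N)) :
    contrAux ψ (S.sum fun p => p.1 ⊗ₜ[K] p.2)
      ∈ Submodule.span K (↑(S.image Prod.fst) : Set M) := by
  rw [map_sum]
  refine Submodule.sum_mem _ fun p hp => ?_
  rw [contrAux_tmul]
  exact Submodule.smul_mem _ _ (Submodule.subset_span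
    (Finset.mem_coe.mpr (Finset.mem_image_of_mem Prod.fst hp)))

end Aux

/-- A separable `K`-linear category is locally finite dimensional. -/
theorem separable_locally_finite_dimensional (K : Type*) [Field K]
    (C : Type*) [SmallCategory C] [Preadditive C] [Linear K C]
    (s : SeparabilityFamily K C) :
    ∀ x y : C, FiniteDimensional K (x ⟶ y) := by
  intro x z
  classical
  -- basis of each Hom space (x ⟶ y)
  let b : ∀ y : C, Module.Basis (Module.Basis.ofVectorSpaceIndex K (x ⟶ y)) K (x ⟶ y) :=
    fun y => Module.Basis.ofVectorSpace K (x ⟶ y)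
  -- representation of `a x y` with basis vectors in the right factor
  choose d hd using fun y : C => exists_rep_basis (b y) (s.a x y)
  -- finite representation of `a z y`
  choose S hS using fun y : C => TensorProduct.exists_finset (s.a z y)
  let W : ∀ y : C, Submodule K (y ⟶ z) :=
    fun y => Submodule.span K (↑((S y).image Prod.fst) : Set (y ⟶ z))
  let T : Finset C := (s.finite_support x).toFinset
  let V : Submodule K (x ⟶ z) :=
    T.sup fun y => (d y).support.sup fun i => (W y).map (Linear.leftComp K z ((b y) i))
  have hWfd : ∀ y : C, FiniteDimensional K (W y) := fun y =>
    FiniteDimensional.span_of_finite K (Finset.finite_toSet _)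
  have hVfd : FiniteDimensional K V := by
    have h2 : ∀ y : C, ∀ i, FiniteDimensional K
        ((W y).map (Linear.leftComp K z ((b y) i))) := fun y i => by
      have := hWfd y
      exact Module.Finite.map (W y) (Linear.leftComp K z ((b y) i))
    haveI h3 : ∀ y : C, FiniteDimensional K
        ↥((d y).support.sup fun i => (W y).map (Linear.leftComp K z ((b y) i))) := fun y => by
      haveI := h2 y
      exact Submodule.finiteDimensional_finset_sup (d y).support
        (fun i => (W y).map (Linear.leftComp K z ((b y) i)))
    exact Submodule.finiteDimensional_finset_sup T
      (fun y => (d y).support.sup fun i => (W y).map (Linear.leftComp K z ((b y) i)))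
  -- every morphism f : x ⟶ z lies in V
  have key : ∀ f : x ⟶ z, f ∈ V := by
    intro f
    -- the identity as finite sum
    have hid : (∑ y ∈ T, compMap K x x y (s.a x y)) = 𝟙 x := by
      rw [← s.sum_comp x]
      exact (finsum_eq_sum_of_support_subset _ (fun y hy => by
        simp only [T, Finset.coe_sort_coe, Set.Finite.coe_toFinset, Set.mem_setOf_eq]
        intro h0
        apply hy
        simp [h0])).symm
    have hf : f = ∑ y ∈ T, (compMap K x x y (s.a x y)) ≫ f := by
      rw [← Preadditive.sum_comp, hid, Category.id_comp]
    rw [hf]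
    refine Submodule.sum_mem _ fun y hyT => ?_
    -- the key membership: (d y i) ≫ f ∈ W y
    have hdf : ∀ i, (d y) i ≫ f ∈ W y := by
      intro i
      have h1 : (d y) i ≫ f = Linear.rightComp K y f ((d y) i) := rfl
      rw [h1, ← contrAux_coord (b y) (d y) i, ← hd y,
        ← contrAux_rTensor ((b y).coord i) (Linear.rightComp K y f) (s.a x y),
        s.compat f y, contrAux_lTensor]
      rw [hS y]
      exact contrAux_mem_span _ _
    -- the y-th summand of f
    have hterm : (compMap K x x y (s.a x y)) ≫ f
        = (d y).sum fun i m => (b y) i ≫ (m ≫ f) := by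
      rw [hd y, map_finsuppSum, Finsupp.sum, Finsupp.sum, Preadditive.sum_comp]
      refine Finset.sum_congr rfl fun i _ => ?_
      have : compMap K x x y ((d y) i ⊗ₜ[K] (b y) i) = (b y) i ≫ (d y) i := by
        simp [compMap]
      rw [this, Category.assoc]
    rw [hterm]
    refine SetLike.le_def.mp (Finset.le_sup hyT) ?_
    rw [Finsupp.sum]
    refine Submodule.sum_mem _ fun i hi => ?_
    refine SetLike.le_def.mp (Finset.le_sup hi) ?_
    exact Submodule.mem_map_of_mem (hdf i)
  have : V = ⊤ := top_unique fun f _ => key f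
  rw [this] at hVfd
  exact Module.finite_def.mpr ((Submodule.fg_top _).mp (Module.finite_def.mp hVfd))
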